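/- Let p q : ℕ, let λ : Fin p → ℝ and α ω : Fin q → ℝ satisfy λ j ≠ 0 for all j and α k ≠ 0 for all k, let κ : ℝ, and let K⁺ K⁻ : Fin p → ℝ and L : Fin q → ℝ be arbitrary coefficients. Define V : (Fin p → ℝ) → (Fin q → ℂ) → ℝ by V u z = ∑_j (if u j > 0 then K⁺ j else K⁻ j) * |u j| ^ (κ / λ j) + ∑_k (L k) * ‖z k‖ ^ (κ / α k), where ^ denotes the real power (rpow). Then for every t : ℝ, every u : Fin p → ℝ and every z : Fin q → ℂ, V (fun j => Real.exp (λ j * t) * u j) (fun k => Complex.exp ((α k + ω k * Complex.I) * t) * z k) = Real.exp (κ * t) * V u z. (Thus every graph v = V(u,z) is invariant under the linear flow with real modes of rates λ j, complex modes of rates α k + i ω k, and enslaved rate κ.) -/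

import Mathlib

/-- Invariance of the piecewise fractional-power graphs `v = V(u,z)` under the
linear flow with real modes of rates `λ j`, complex modes of rates `α k + i ω k`,
and enslaved rate `κ`. -/
theorem stmt_0 (p q : ℕ) (lam : Fin p → ℝ) (alp om : Fin q → ℝ)
    (hlam : ∀ j, lam j ≠ 0) (halp : ∀ k, alp k ≠ 0) (κ : ℝ)
    (Kp Km : Fin p → ℝ) (L : Fin q → ℝ)
    (V : (Fin p → ℝ) → (Fin q → ℂ) → ℝ)
    (hV : ∀ (u : Fin p → ℝ) (z : Fin q → ℂ),
      V u z = (∑ j, (if u j > 0 then Kp j else Km j) * |u j| ^ (κ / lam j))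
        + ∑ k, L k * ‖z k‖ ^ (κ / alp k)) :
    ∀ (t : ℝ) (u : Fin p → ℝ) (z : Fin q → ℂ),
      V (fun j => Real.exp (lam j * t) * u j)
        (fun k => Complex.exp ((↑(alp k) + ↑(om k) * Complex.I) * ↑t) * z k)
        = Real.exp (κ * t) * V u z := by
  intro t u z
  rw [hV, hV, mul_add, Finset.mul_sum, Finset.mul_sum]
  congr 1
  · apply Finset.sum_congr rfl
    intro j _
    have hexp : (0:ℝ) < Real.exp (lam j * t) := Real.exp_pos _
    have hsign : (Real.exp (lam j * t) * u j > 0) ↔ (u j > 0) := by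
      constructor
      · intro h; nlinarith
      · intro h; positivity
    have habs : |Real.exp (lam j * t) * u j| = Real.exp (lam j * t) * |u j| := by
      rw [abs_mul, abs_of_pos hexp]
    rw [habs, Real.mul_rpow hexp.le (abs_nonneg _),
      ← Real.exp_mul, if_congr hsign rfl rfl]
    have : lam j * t * (κ / lam j) = κ * t := by
      field_simp [hlam j]
    rw [this]; ring
  · apply Finset.sum_congr rfl
    intro k _
    rw [norm_mul, Complex.norm_exp]
    have hre : (((alp k : ℂ) + (om k : ℂ) * Complex.I) * (t : ℂ)).re = alp k * t := by
      simp [add_mul, Complex.mul_re]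
    rw [hre, Real.mul_rpow (Real.exp_pos _).le (norm_nonneg _), ← Real.exp_mul]
    have : alp k * t * (κ / alp k) = κ * t := by
      field_simp [halp k]
    rw [this]; ring
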